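/- For every n ∈ ℕ and every v ∈ ℝ, I_n(v) = 2e^{−v²/2} · Σ_{k=0}^{⌊(n−1)/2⌋} 2^k · ((n−1)!!/(n−1−2k)!!) · H_{n−1−2k}(v) + 𝟙_{n even} · 2^{n/2} (n−1)!! √(2π) (1 − Φ(v)). -/

import Mathlib

/-- The Hermite polynomials `H_n(x) = (-1)^n e^{x²} (d/dx)^n e^{-x²}`. -/
noncomputable def hermiteH (n : ℕ) (x : ℝ) : ℝ :=
  (-1 : ℝ) ^ n * Real.exp (x ^ 2) * iteratedDeriv n (fun y => Real.exp (-y ^ 2)) x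

/-- `I_n(v) = ∫_v^∞ e^{-t²/2} H_n(t) dt`. -/
noncomputable def hermiteI (n : ℕ) (v : ℝ) : ℝ :=
  ∫ t in Set.Ioi v, Real.exp (-t ^ 2 / 2) * hermiteH n t

/-- The standard Gaussian distribution function `Φ`. -/
noncomputable def gaussPhi (x : ℝ) : ℝ :=
  ∫ y in Set.Iic x, (Real.sqrt (2 * Real.pi))⁻¹ * Real.exp (-y ^ 2 / 2)

open MeasureTheory Real Set Filter Polynomial

lemma gaussCD : ContDiff ℝ (↑(⊤:ℕ∞)) (fun y : ℝ => Real.exp (-y ^ 2)) := by fun_prop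

lemma gaussD (n : ℕ) (x : ℝ) :
    HasDerivAt (iteratedDeriv n (fun y : ℝ => Real.exp (-y ^ 2)))
      (iteratedDeriv (n + 1) (fun y : ℝ => Real.exp (-y ^ 2)) x) x := by
  rw [iteratedDeriv_succ, iteratedDeriv_eq_iterate]
  exact ((gaussCD.iterate_deriv n).differentiable (by simp)).differentiableAt.hasDerivAt

lemma hermiteH_zero (x : ℝ) : hermiteH 0 x = 1 := by
  simp [hermiteH, ← Real.exp_add]

lemma hermiteH_aux (n : ℕ) (x : ℝ) :
    HasDerivAt (hermiteH n) (2 * x * hermiteH n x - hermiteH (n + 1) x) x := by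
  have h1 : HasDerivAt (fun y : ℝ => Real.exp (y ^ 2)) (Real.exp (x ^ 2) * (2 * x)) x := by
    simpa using (hasDerivAt_pow 2 x).exp
  have h := ((h1.mul (gaussD n x)).const_mul ((-1 : ℝ) ^ n))
  convert h using 1
  · rfl
  · rfl
  · ext y; simp [hermiteH]; ring
  · simp only [hermiteH, pow_succ]; ring

lemma hermiteH_hasDerivAt : ∀ n : ℕ, ∀ x : ℝ,
    HasDerivAt (hermiteH n) (2 * n * hermiteH (n - 1) x) x := by
  intro n
  induction n with
  | zero =>
    intro x
    have : hermiteH 0 = fun _ : ℝ => (1 : ℝ) := funext hermiteH_zero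
    rw [this]
    simpa using hasDerivAt_const x (1 : ℝ)
  | succ n ih =>
    have heq : hermiteH (n + 1) = fun x => 2 * x * hermiteH n x - 2 * n * hermiteH (n - 1) x := by
      funext x
      have := (hermiteH_aux n x).unique (ih x)
      linarith
    intro x
    rw [heq]
    match n with
    | 0 =>
      have h : HasDerivAt (fun y : ℝ => 2 * y * hermiteH 0 y - 2 * (0:ℕ) * hermiteH (0-1) y)
          (2 * 1 * hermiteH 0 x + 2 * x * (2 * (0:ℕ) * hermiteH (0-1) x) - 0) x := by
        exact (((hasDerivAt_id x).const_mul 2).mul (ih x)).sub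
          (by simpa using (hasDerivAt_const x (0:ℝ)))
      convert h using 1
      push_cast [hermiteH_zero]
      ring
    | m + 1 =>
      have h : HasDerivAt
          (fun y : ℝ => 2 * y * hermiteH (m+1) y - 2 * (m+1:ℕ) * hermiteH m y)
          ((2 * 1 * hermiteH (m+1) x + 2 * x * (2 * (m+1:ℕ) * hermiteH m x))
            - 2 * (m+1:ℕ) * (2 * x * hermiteH m x - hermiteH (m+1) x)) x := by
        exact (((hasDerivAt_id x).const_mul 2).mul (ih x)).sub
          ((hermiteH_aux m x).const_mul _)
      convert h using 1
      simp only [Nat.add_sub_cancel]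
      push_cast
      ring

lemma hermiteH_succ (n : ℕ) (x : ℝ) :
    hermiteH (n + 1) x = 2 * x * hermiteH n x - 2 * n * hermiteH (n - 1) x := by
  have := (hermiteH_aux n x).unique (hermiteH_hasDerivAt n x)
  linarith

lemma hermiteH_one (x : ℝ) : hermiteH 1 x = 2 * x := by
  have := hermiteH_succ 0 x
  simpa [hermiteH_zero] using this

lemma integrable_pow_gauss {b : ℝ} (hb : 0 < b) (n : ℕ) :
    Integrable (fun x : ℝ => x ^ n * Real.exp (-b * x ^ 2)) := by
  rw [← integrableOn_univ, ← Set.Iio_union_Ici (a := (0:ℝ)), integrableOn_union,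
    integrableOn_Ici_iff_integrableOn_Ioi]
  have hIoi : IntegrableOn (fun x : ℝ => x ^ n * Real.exp (-b * x ^ 2)) (Set.Ioi 0) := by
    have := integrableOn_rpow_mul_exp_neg_mul_sq hb (s := (n:ℝ)) (lt_of_lt_of_le neg_one_lt_zero (Nat.cast_nonneg n))
    refine this.congr_fun (fun x hx => ?_) measurableSet_Ioi
    simp only [Real.rpow_natCast]
  refine ⟨?_, hIoi⟩
  rw [← (Measure.measurePreserving_neg (volume : Measure ℝ)).integrableOn_comp_preimage
      (Homeomorph.neg ℝ).measurableEmbedding]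
  simp only [Function.comp_def, neg_preimage, neg_Iio, neg_neg, neg_zero]
  have : ∀ x : ℝ, (-x) ^ n * Real.exp (-b * (-x) ^ 2)
      = (-1) ^ n * (x ^ n * Real.exp (-b * x ^ 2)) := by
    intro x; rw [neg_pow, neg_sq]; ring
  simp only [this]
  exact (hIoi.const_mul _)

lemma integrable_poly_gauss (p : Polynomial ℝ) :
    Integrable (fun x : ℝ => Real.exp (-x ^ 2 / 2) * p.eval x) := by
  have hrw : ∀ x : ℝ, Real.exp (-x ^ 2 / 2) * p.eval x
      = ∑ i ∈ Finset.range (p.natDegree + 1),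
          p.coeff i * (x ^ i * Real.exp (-(1/2 : ℝ) * x ^ 2)) := by
    intro x
    rw [Polynomial.eval_eq_sum_range, Finset.mul_sum]
    refine Finset.sum_congr rfl fun i _ => ?_
    rw [show -x^2/2 = -(1/2:ℝ)*x^2 by ring]; ring
  simp only [hrw]
  exact integrable_finset_sum _ fun i _ =>
    ((integrable_pow_gauss (by norm_num) i).const_mul _)

lemma tendsto_poly_gauss (p : Polynomial ℝ) :
    Tendsto (fun x : ℝ => Real.exp (-x ^ 2 / 2) * p.eval x) atTop (nhds 0) := by
  have hrw : ∀ x : ℝ, Real.exp (-x ^ 2 / 2) * p.eval x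
      = ∑ i ∈ Finset.range (p.natDegree + 1),
          p.coeff i * (x ^ ((i:ℝ)) * Real.exp (-(1/2 : ℝ) * x ^ 2)) := by
    intro x
    rw [Polynomial.eval_eq_sum_range, Finset.mul_sum]
    refine Finset.sum_congr rfl fun i _ => ?_
    rw [Real.rpow_natCast, show -x^2/2 = -(1/2:ℝ)*x^2 by ring]; ring
  simp only [hrw]
  have h0 : Tendsto (fun _ : ℝ => (0:ℝ)) atTop (nhds 0) := tendsto_const_nhds
  rw [show (0:ℝ) = ∑ i ∈ Finset.range (p.natDegree + 1), (0:ℝ) by simp]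
  refine tendsto_finset_sum _ fun i _ => ?_
  rw [show (0:ℝ) = p.coeff i * 0 by ring]
  refine Tendsto.const_mul _ ?_
  have := (rpow_mul_exp_neg_mul_sq_isLittleO_exp_neg (by norm_num : (0:ℝ) < 1/2) (i:ℝ))
  refine this.isBigO.trans_tendsto ?_
  have : Tendsto (fun x : ℝ => -(1/2) * x) atTop atBot := by
    apply Tendsto.const_mul_atTop_of_neg (by norm_num) tendsto_id
  exact Real.tendsto_exp_atBot.comp this

lemma hermiteH_poly : ∀ n : ℕ, ∃ p : Polynomial ℝ, hermiteH n = fun x => p.eval x := by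
  intro n
  induction n with
  | zero => exact ⟨1, funext fun x => by simp [hermiteH_zero]⟩
  | succ n ih =>
    obtain ⟨p, hp⟩ := ih
    refine ⟨Polynomial.C 2 * Polynomial.X * p - Polynomial.derivative p, funext fun x => ?_⟩
    have hd : HasDerivAt (hermiteH n) ((Polynomial.derivative p).eval x) x := by
      rw [hp]; exact p.hasDerivAt x
    have h2 := (hermiteH_aux n x).unique hd
    have hpx : hermiteH n x = p.eval x := by rw [hp]
    rw [hpx] at h2
    simp only [Polynomial.eval_sub, Polynomial.eval_mul, Polynomial.eval_C, Polynomial.eval_X]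
    linarith

lemma integrable_gauss_hermiteH (n : ℕ) :
    Integrable (fun t : ℝ => Real.exp (-t ^ 2 / 2) * hermiteH n t) := by
  obtain ⟨p, hp⟩ := hermiteH_poly n
  rw [hp]; exact integrable_poly_gauss p

lemma tendsto_gauss_hermiteH (n : ℕ) :
    Tendsto (fun t : ℝ => Real.exp (-t ^ 2 / 2) * hermiteH n t) atTop (nhds 0) := by
  obtain ⟨p, hp⟩ := hermiteH_poly n
  rw [hp]; exact tendsto_poly_gauss p

lemma hasDerivAt_gauss (t : ℝ) :
    HasDerivAt (fun y : ℝ => Real.exp (-y ^ 2 / 2)) (-t * Real.exp (-t ^ 2 / 2)) t := by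
  have h := (((hasDerivAt_pow 2 t).neg).div_const 2).exp
  convert h using 1
  simp; rw [Pi.neg_apply]; ring

lemma hermiteI_rec (n : ℕ) (v : ℝ) :
    hermiteI (n + 2) v
      = 2 * Real.exp (-v ^ 2 / 2) * hermiteH (n + 1) v + 2 * (n + 1) * hermiteI n v := by
  set F : ℝ → ℝ := fun t => Real.exp (-t ^ 2 / 2) * hermiteH (n + 1) t with hF
  have hderiv : ∀ t ∈ Ici v, HasDerivAt F
      (((n : ℝ) + 1) * (Real.exp (-t ^ 2 / 2) * hermiteH n t)
        - (1 / 2) * (Real.exp (-t ^ 2 / 2) * hermiteH (n + 2) t)) t := by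
    intro t _
    have hH := hermiteH_hasDerivAt (n + 1) t
    simp only [Nat.add_sub_cancel] at hH
    have h := (hasDerivAt_gauss t).mul hH
    convert h using 1
    · rfl
    · rfl
    · rfl
    have hs := hermiteH_succ (n + 1) t
    simp only [Nat.add_sub_cancel] at hs
    rw [hs]
    push_cast
    ring
  have hint : IntegrableOn (fun t : ℝ =>
      ((n : ℝ) + 1) * (Real.exp (-t ^ 2 / 2) * hermiteH n t)
        - (1 / 2) * (Real.exp (-t ^ 2 / 2) * hermiteH (n + 2) t)) (Ioi v) :=
    (((integrable_gauss_hermiteH n).const_mul _).sub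
      ((integrable_gauss_hermiteH (n + 2)).const_mul _)).integrableOn
  have key := integral_Ioi_of_hasDerivAt_of_tendsto' hderiv hint (tendsto_gauss_hermiteH (n + 1))
  rw [integral_sub (((integrable_gauss_hermiteH n).const_mul _).integrableOn)
      (((integrable_gauss_hermiteH (n + 2)).const_mul _).integrableOn),
    integral_const_mul, integral_const_mul] at key
  have hFv : F v = Real.exp (-v ^ 2 / 2) * hermiteH (n + 1) v := rfl
  unfold hermiteI
  rw [hFv] at key
  push_cast
  linarith [key]

lemma total_gauss : ∫ x : ℝ, Real.exp (-x ^ 2 / 2) = Real.sqrt (2 * Real.pi) := by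
  have h := integral_gaussian (1 / 2)
  rw [show Real.pi / (1 / 2) = 2 * Real.pi by ring] at h
  rw [← h]
  congr 1; ext x; congr 1; ring

lemma hermiteI_zero (v : ℝ) : hermiteI 0 v = Real.sqrt (2 * Real.pi) * (1 - gaussPhi v) := by
  have hint : Integrable (fun t : ℝ => Real.exp (-t ^ 2 / 2)) := by
    have := integrable_poly_gauss 1
    simpa using this
  have hsplit := intervalIntegral.integral_Iic_add_Ioi (b := v) hint.integrableOn hint.integrableOn
  have hI0 : hermiteI 0 v = ∫ t in Set.Ioi v, Real.exp (-t ^ 2 / 2) := by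
    unfold hermiteI
    congr 1; ext t; rw [hermiteH_zero, mul_one]
  have hphi : gaussPhi v = (Real.sqrt (2 * Real.pi))⁻¹ * ∫ t in Set.Iic v,
      Real.exp (-t ^ 2 / 2) := by
    unfold gaussPhi; rw [integral_const_mul]
  have hpos : (0 : ℝ) < Real.sqrt (2 * Real.pi) :=
    Real.sqrt_pos.2 (by positivity)
  rw [total_gauss] at hsplit
  rw [hI0, hphi]
  have hc : Real.sqrt (2 * Real.pi) * ((Real.sqrt (2 * Real.pi))⁻¹ *
      ∫ t in Set.Iic v, Real.exp (-t ^ 2 / 2)) = ∫ t in Set.Iic v, Real.exp (-t ^ 2 / 2) := by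
    rw [← mul_assoc, mul_inv_cancel₀ hpos.ne', one_mul]
  have hexp : Real.sqrt (2 * Real.pi) * (1 - (Real.sqrt (2 * Real.pi))⁻¹ *
      ∫ t in Set.Iic v, Real.exp (-t ^ 2 / 2))
      = Real.sqrt (2 * Real.pi) - ∫ t in Set.Iic v, Real.exp (-t ^ 2 / 2) := by
    rw [mul_sub, mul_one, hc]
  rw [hexp]
  linarith [hsplit]

lemma hermiteI_one (v : ℝ) : hermiteI 1 v = 2 * Real.exp (-v ^ 2 / 2) := by
  have hderiv : ∀ t ∈ Ici v, HasDerivAt (fun y : ℝ => -(2 * Real.exp (-y ^ 2 / 2)))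
      (Real.exp (-t ^ 2 / 2) * hermiteH 1 t) t := by
    intro t _
    have h := ((hasDerivAt_gauss t).const_mul (2 : ℝ)).neg
    convert h using 1
    · rfl
    · rfl
    · rfl
    rw [hermiteH_one]; ring
  have htend : Tendsto (fun y : ℝ => -(2 * Real.exp (-y ^ 2 / 2))) atTop (nhds 0) := by
    have h := ((tendsto_poly_gauss 1).const_mul (2 : ℝ)).neg
    simp only [Polynomial.eval_one, mul_one, neg_zero, mul_zero] at h
    exact h
  have key := integral_Ioi_of_hasDerivAt_of_tendsto' hderiv
    ((integrable_gauss_hermiteH 1).integrableOn) htend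
  unfold hermiteI
  rw [key]; ring


lemma dfact_succ (n : ℕ) :
    Nat.doubleFactorial (n + 1) = (n + 1) * Nat.doubleFactorial (n - 1) := by
  cases n with
  | zero => rfl
  | succ m => exact Nat.doubleFactorial_add_two m


/-- Closed form for `I_n(v)`; the sum ranges over `0 ≤ k ≤ ⌊(n-1)/2⌋` and is empty
when `n = 0` (note `(n+1)/2 = ⌊(n-1)/2⌋ + 1` for `n ≥ 1`). -/
theorem hermiteI_eq (n : ℕ) (v : ℝ) :
    hermiteI n v
      = 2 * Real.exp (-v ^ 2 / 2) *
          ∑ k ∈ Finset.range ((n + 1) / 2),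
            (2 : ℝ) ^ k
              * ((Nat.doubleFactorial (n - 1) : ℝ)
                  / (Nat.doubleFactorial (n - 1 - 2 * k) : ℝ))
              * hermiteH (n - 1 - 2 * k) v
        + (if Even n then
            (2 : ℝ) ^ (n / 2) * (Nat.doubleFactorial (n - 1) : ℝ)
              * Real.sqrt (2 * Real.pi) * (1 - gaussPhi v)
          else 0) := by
  induction n using Nat.strong_induction_on with
  | _ n ih =>
    match n with
    | 0 =>
      rw [hermiteI_zero]
      norm_num [Nat.doubleFactorial]
    | 1 =>
      rw [hermiteI_one]
      simp [Finset.sum_range_one, hermiteH_zero, Nat.doubleFactorial]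
    | (m+2) =>
      rw [hermiteI_rec m v, ih m (by omega)]
      have hrange : (m + 2 + 1) / 2 = (m + 1) / 2 + 1 := by omega
      rw [hrange, Finset.sum_range_succ']
      have hd1 : m + 2 - 1 = m + 1 := rfl
      have hK : ∀ k, (2:ℝ) ^ (k+1)
            * ((Nat.doubleFactorial (m + 2 - 1) : ℝ)
                / (Nat.doubleFactorial (m + 2 - 1 - 2 * (k+1)) : ℝ))
            * hermiteH (m + 2 - 1 - 2 * (k+1)) v
          = 2 * ((m:ℝ) + 1) * ((2:ℝ) ^ k
            * ((Nat.doubleFactorial (m - 1) : ℝ)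
                / (Nat.doubleFactorial (m - 1 - 2 * k) : ℝ))
            * hermiteH (m - 1 - 2 * k) v) := by
        intro k
        have hidx : m + 2 - 1 - 2 * (k+1) = m - 1 - 2 * k := by omega
        rw [hidx, hd1, dfact_succ m]
        push_cast
        ring
      rw [Finset.sum_congr rfl (fun k _ => hK k), ← Finset.mul_sum]
      have hzero : (2:ℝ) ^ 0
            * ((Nat.doubleFactorial (m + 2 - 1) : ℝ)
                / (Nat.doubleFactorial (m + 2 - 1 - 2 * 0) : ℝ))
            * hermiteH (m + 2 - 1 - 2 * 0) v = hermiteH (m + 1) v := by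
        have : m + 2 - 1 - 2 * 0 = m + 1 := by omega
        rw [this, hd1, div_self (by exact_mod_cast (Nat.doubleFactorial_pos (m+1)).ne')]
        ring
      rw [hzero]
      have heven : Even (m + 2) ↔ Even m := by
        rw [Nat.even_iff, Nat.even_iff]; omega
      have hdiv2 : (m + 2) / 2 = m / 2 + 1 := by omega
      by_cases hm : Even m
      · rw [if_pos (heven.2 hm), if_pos hm, hdiv2, hd1, dfact_succ m]
        push_cast
        ring
      · rw [if_neg (fun h => hm (heven.1 h)), if_neg hm]
        push_cast
        ring
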